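/- Let G = (V, A) be a finite, weakly connected directed graph with continuous, strictly increasing, odd potential functions Φ_a, potential bounds π⁻_u ≤ π⁺_u for each node, and flow bounds q⁻_a ≤ q⁺_a for each arc. Let U be a non-empty compact set of balanced load scenarios. Define φ_{u,v} := sup over d ∈ U and potential-based flows (q,π) for d of (π_u − π_v); q̲_a := inf over d ∈ U and potential-based flows (q,π) for d of q_a; and q̄_a := sup of q_a analogously (all without imposing the potential and flow bounds). Suppose every d ∈ U admits at least one potential-based flow. Then the following are equivalent: (i) for every d ∈ U there exists a potential-based flow (q,π) with π⁻_u ≤ π_u ≤ π⁺_u for all u and q⁻_a ≤ q_a ≤ q⁺_a for all a; (ii) φ_{u,v} ≤ π⁺_u − π⁻_v for all pairs of distinct nodes (u,v), and q̲_a ≥ q⁻_a and q̄_a ≤ q⁺_a for all arcs a. -/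

import Mathlib

/-- Mass flow conservation of a flow `q` with respect to a load scenario `d`. -/
def FlowCons {V A : Type} [Fintype A] [DecidableEq V]
    (src tgt : A → V) (q : A → ℝ) (d : V → ℝ) : Prop :=
  ∀ u : V,
    (∑ a : A, if tgt a = u then q a else 0) -
      (∑ a : A, if src a = u then q a else 0) = d u

/-- Potential coupling `π_u − π_v = Φ_a(q_a)` on every arc. -/
def PotCoup {V A : Type} (src tgt : A → V) (Φ : A → ℝ → ℝ)
    (q : A → ℝ) (π : V → ℝ) : Prop :=
  ∀ a : A, π (src a) - π (tgt a) = Φ a (q a)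

/-- Weak connectivity of the directed graph. -/
def WeakConn {V A : Type} (src tgt : A → V) : Prop :=
  ∀ u v : V, Relation.ReflTransGen
    (fun x y => ∃ a : A, (src a = x ∧ tgt a = y) ∨ (src a = y ∧ tgt a = x)) u v

lemma sum_shuffle {V A : Type} [Fintype V] [Fintype A] [DecidableEq V]
    (f : A → V) (ρ : V → ℝ) (r : A → ℝ) :
    ∑ a : A, ρ (f a) * r a = ∑ u : V, ρ u * ∑ a : A, (if f a = u then r a else 0) := by
  have h : ∀ a : A, ρ (f a) * r a = ∑ u : V, if f a = u then ρ u * r a else 0 := by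
    intro a; simp
  simp_rw [h, Finset.mul_sum, mul_ite, mul_zero]
  exact Finset.sum_comm

lemma pbf_unique {V A : Type} [Fintype V] [Fintype A] [DecidableEq V]
    (src tgt : A → V) (Φ : A → ℝ → ℝ) (hmono : ∀ a, StrictMono (Φ a))
    (hconn : WeakConn src tgt) (d : V → ℝ)
    (q1 q2 : A → ℝ) (π1 π2 : V → ℝ)
    (hf1 : FlowCons src tgt q1 d) (hp1 : PotCoup src tgt Φ q1 π1)
    (hf2 : FlowCons src tgt q2 d) (hp2 : PotCoup src tgt Φ q2 π2) :
    (∀ a, q1 a = q2 a) ∧ (∀ u v, π1 u - π2 u = π1 v - π2 v) := by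
  set ρ : V → ℝ := fun u => π1 u - π2 u with hρdef
  set r : A → ℝ := fun a => q1 a - q2 a with hrdef
  have hS : ∑ a : A, (Φ a (q1 a) - Φ a (q2 a)) * r a = 0 := by
    have h1 : ∀ a, Φ a (q1 a) - Φ a (q2 a) = ρ (src a) - ρ (tgt a) := by
      intro a
      have e1 := hp1 a; have e2 := hp2 a
      simp only [hρdef]; linarith
    calc ∑ a, (Φ a (q1 a) - Φ a (q2 a)) * r a
        = ∑ a, (ρ (src a) * r a - ρ (tgt a) * r a) := by
          simp_rw [h1, sub_mul]
      _ = ∑ a, ρ (src a) * r a - ∑ a, ρ (tgt a) * r a := Finset.sum_sub_distrib _ _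
      _ = ∑ u, ρ u * ∑ a, (if src a = u then r a else 0)
          - ∑ u, ρ u * ∑ a, (if tgt a = u then r a else 0) := by
          rw [sum_shuffle src, sum_shuffle tgt]
      _ = ∑ u, ρ u * ((∑ a, (if src a = u then r a else 0))
            - ∑ a, (if tgt a = u then r a else 0)) := by
          rw [← Finset.sum_sub_distrib]; simp_rw [mul_sub]
      _ = 0 := by
          apply Finset.sum_eq_zero; intro u _
          have e1 : ∑ a, (if src a = u then r a else 0)
              = (∑ a, if src a = u then q1 a else 0)
                - (∑ a, if src a = u then q2 a else 0) := by
            rw [← Finset.sum_sub_distrib]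
            apply Finset.sum_congr rfl; intro a _
            by_cases h : src a = u <;> simp [h, hrdef]
          have e2 : ∑ a, (if tgt a = u then r a else 0)
              = (∑ a, if tgt a = u then q1 a else 0)
                - (∑ a, if tgt a = u then q2 a else 0) := by
            rw [← Finset.sum_sub_distrib]
            apply Finset.sum_congr rfl; intro a _
            by_cases h : tgt a = u <;> simp [h, hrdef]
          have f1 := hf1 u; have f2 := hf2 u
          have : (∑ a, (if src a = u then r a else 0))
              - (∑ a, (if tgt a = u then r a else 0)) = 0 := by
            rw [e1, e2]; linarith
          rw [this, mul_zero]
  have hterm : ∀ a : A, 0 ≤ (Φ a (q1 a) - Φ a (q2 a)) * r a := by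
    intro a
    rcases lt_trichotomy (q1 a) (q2 a) with h | h | h
    · have h2 := hmono a h
      have hr : r a < 0 := by simp [hrdef]; linarith
      nlinarith
    · simp [hrdef, h]
    · have h2 := hmono a h
      have hr : 0 < r a := by simp [hrdef]; linarith
      nlinarith
  have hzero : ∀ a : A, (Φ a (q1 a) - Φ a (q2 a)) * r a = 0 := fun a =>
    (Finset.sum_eq_zero_iff_of_nonneg (fun a _ => hterm a)).mp hS a (Finset.mem_univ a)
  have hq : ∀ a, q1 a = q2 a := by
    intro a
    by_contra h
    rcases lt_or_gt_of_ne h with h | h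
    · have h2 := hmono a h
      have hr : r a < 0 := by simp [hrdef]; linarith
      nlinarith [hzero a]
    · have h2 := hmono a h
      have hr : 0 < r a := by simp [hrdef]; linarith
      nlinarith [hzero a]
  refine ⟨hq, ?_⟩
  have hρeq : ∀ a : A, ρ (src a) = ρ (tgt a) := by
    intro a
    have e1 := hp1 a; have e2 := hp2 a
    rw [hq a] at e1
    simp only [hρdef]; linarith
  intro u v
  induction hconn u v with
  | refl => rfl
  | tail _ hab ih =>
      obtain ⟨a, ⟨h1, h2⟩ | ⟨h1, h2⟩⟩ := hab
      · have hh := hρeq a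
        simp only [hρdef] at hh
        rw [ih, ← h1, ← h2]; exact hh
      · have hh := hρeq a
        simp only [hρdef] at hh
        rw [ih, ← h1, ← h2]; exact hh.symm

/-- Characterization of robust feasibility on a weakly connected graph:
every scenario of the uncertainty set admits a potential-based flow respecting
the potential and flow bounds if and only if the worst-case potential
differences stay below `π⁺_u − π⁻_v` for all pairs of distinct nodes and the
worst-case arc flows stay within the flow bounds (worst case taken over all
scenarios and all bound-free potential-based flows). -/
theorem robust_feasibility_characterization
    {V A : Type} [Fintype V] [Fintype A] [DecidableEq V]
    (src tgt : A → V) (Φ : A → ℝ → ℝ)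
    (hcont : ∀ a, Continuous (Φ a)) (hmono : ∀ a, StrictMono (Φ a))
    (hodd : ∀ a (x : ℝ), Φ a (-x) = -Φ a x)
    (hconn : WeakConn src tgt)
    (πlo πhi : V → ℝ) (hπb : ∀ u, πlo u ≤ πhi u)
    (qlo qhi : A → ℝ) (hqb : ∀ a, qlo a ≤ qhi a)
    (U : Set (V → ℝ)) (hUne : U.Nonempty) (hUcomp : IsCompact U)
    (hUbal : ∀ d ∈ U, ∑ u : V, d u = 0)
    (hfeas : ∀ d ∈ U, ∃ (q : A → ℝ) (π : V → ℝ),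
      FlowCons src tgt q d ∧ PotCoup src tgt Φ q π) :
    (∀ d ∈ U, ∃ (q : A → ℝ) (π : V → ℝ),
        FlowCons src tgt q d ∧ PotCoup src tgt Φ q π ∧
        (∀ u : V, πlo u ≤ π u ∧ π u ≤ πhi u) ∧
        (∀ a : A, qlo a ≤ q a ∧ q a ≤ qhi a))
    ↔
    ((∀ u v : V, u ≠ v → ∀ d ∈ U, ∀ (q : A → ℝ) (π : V → ℝ),
        FlowCons src tgt q d → PotCoup src tgt Φ q π →
        π u - π v ≤ πhi u - πlo v) ∧
     (∀ a : A, ∀ d ∈ U, ∀ (q : A → ℝ) (π : V → ℝ),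
        FlowCons src tgt q d → PotCoup src tgt Φ q π →
        qlo a ≤ q a ∧ q a ≤ qhi a)) := by
  constructor
  · intro h
    constructor
    · intro u v huv d hd q π hfc hpc
      obtain ⟨q', π', hfc', hpc', hπ, hq⟩ := h d hd
      obtain ⟨_, hρ⟩ := pbf_unique src tgt Φ hmono hconn d q q' π π' hfc hpc hfc' hpc'
      have h1 := hρ u v
      have h2 := (hπ u).2
      have h3 := (hπ v).1
      linarith
    · intro a d hd q π hfc hpc
      obtain ⟨q', π', hfc', hpc', hπ, hq⟩ := h d hd
      obtain ⟨hqe, _⟩ := pbf_unique src tgt Φ hmono hconn d q q' π π' hfc hpc hfc' hpc'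
      rw [hqe a]; exact hq a
  · rintro ⟨hφ, hq⟩ d hd
    obtain ⟨q, π, hfc, hpc⟩ := hfeas d hd
    cases isEmpty_or_nonempty V with
    | inl hV =>
        exact ⟨q, π, hfc, hpc, fun u => hV.elim u, fun a => hq a d hd q π hfc hpc⟩
    | inr hV =>
        set c : ℝ := Finset.univ.sup' Finset.univ_nonempty (fun u => πlo u - π u) with hc
        refine ⟨q, fun u => π u + c, hfc, ?_, ?_, fun a => hq a d hd q π hfc hpc⟩
        · intro a
          have := hpc a
          simp only []
          ring_nf
          linarith [hpc a]
        · intro u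
          constructor
          · have h : πlo u - π u ≤ c := by
              rw [hc]; exact Finset.le_sup' (fun u => πlo u - π u) (Finset.mem_univ u)
            show πlo u ≤ π u + c
            linarith
          · have h : c ≤ πhi u - π u := by
              rw [hc]
              apply Finset.sup'_le
              intro v _
              by_cases hvu : v = u
              · subst hvu; linarith [hπb v]
              · have := hφ u v (Ne.symm hvu) d hd q π hfc hpc
                linarith
            show π u + c ≤ πhi u
            linarith
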